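/- For n ≥ 7 and t ∈ [cos(2π/n), 1), the function f(t) := (1-t)·n²(n²-1)/3 - 2(1+t)·n² + 2(1+t)·(1 - T_n(t))/(1-t) is convex on [cos(2π/n), 1). -/

import Mathlib

set_option maxHeartbeats 1000000

open Real

/-- Chebyshev polynomial of the first kind, as a real function. -/
noncomputable def Tch (n : ℕ) (x : ℝ) : ℝ := (Polynomial.Chebyshev.T ℝ n).eval x

section Aux
open Polynomial Polynomial.Chebyshev

lemma iter_deriv_mul_X_sub_C (r : ℝ) (Q : ℝ[X]) : ∀ k : ℕ,
    derivative^[k+1] ((X - C r) * Q)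
      = (X - C r) * derivative^[k+1] Q + C ((k:ℝ)+1) * derivative^[k] Q := by
  intro k
  induction k with
  | zero => simp [derivative_mul]; ring
  | succ k ih =>
    rw [Function.iterate_succ_apply', ih, derivative_add, derivative_mul, derivative_mul]
    simp [← Function.iterate_succ_apply']
    ring

lemma prod_iter_deriv_nonneg (a : ℝ) :
    ∀ (M : Multiset ℝ), (∀ r ∈ M, r ≤ a) → ∀ (c : ℝ), 0 ≤ c → ∀ (k : ℕ) (t : ℝ), a ≤ t →
      0 ≤ (derivative^[k] (C c * (M.map fun r => X - C r).prod)).eval t := by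
  intro M
  induction M using Multiset.induction with
  | empty =>
    intro _ c hc k t _
    cases k with
    | zero => simpa using hc
    | succ k =>
      rw [Function.iterate_succ_apply]
      simp
  | cons r M ih =>
    intro hM c hc k t ht
    have hle : ∀ r' ∈ M, r' ≤ a := fun r' h => hM r' (Multiset.mem_cons_of_mem h)
    have hr : r ≤ a := hM r (Multiset.mem_cons_self r M)
    have key : C c * ((M.map fun r => X - C r).prod * (X - C r))
        = (X - C r) * (C c * (M.map fun r => X - C r).prod) := by ring
    rw [Multiset.map_cons, Multiset.prod_cons]
    have h2 : C c * ((X - C r) * (M.map fun r => X - C r).prod)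
        = (X - C r) * (C c * (M.map fun r => X - C r).prod) := by ring
    rw [h2]
    set Q := C c * (M.map fun r => X - C r).prod with hQ
    cases k with
    | zero =>
      simp only [Function.iterate_zero, id_eq, eval_mul, eval_sub, eval_X, eval_C]
      have := ih hle c hc 0 t ht
      simp only [Function.iterate_zero, id_eq] at this
      nlinarith [this]
    | succ k =>
      rw [iter_deriv_mul_X_sub_C]
      simp only [eval_add, eval_mul, eval_sub, eval_X, eval_C]
      have h1 := ih hle c hc (k+1) t ht
      have h0 := ih hle c hc k t ht
      have hk : (0:ℝ) ≤ (k:ℝ)+1 := by positivity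
      nlinarith

lemma U_spec : ∀ m : ℕ, (U ℝ m).natDegree = m ∧ (U ℝ m).leadingCoeff = 2^m
  | 0 => by simp [U_zero]
  | 1 => by
      have h : (U ℝ (1:ℕ)) = C 2 * X := by rw [show ((1:ℕ):ℤ) = 1 from rfl, U_one, map_ofNat]
      rw [h]
      constructor
      · simp
      · rw [leadingCoeff_mul, leadingCoeff_C, leadingCoeff_X]; norm_num
  | (m+2) => by
      obtain ⟨hd1, hl1⟩ := U_spec (m+1)
      obtain ⟨hd0, hl0⟩ := U_spec m
      have hne1 : U ℝ (m+1 : ℕ) ≠ 0 := by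
        intro h; rw [h] at hl1; simp at hl1
        exact absurd hl1.symm (by positivity)
      have hrec : U ℝ (m+2 : ℕ) = 2 * X * U ℝ (m+1 : ℕ) - U ℝ m := by
        have := U_add_two ℝ (m : ℤ)
        rw [show ((m+2:ℕ):ℤ) = (m:ℤ) + 2 by push_cast; ring, this,
          show ((m:ℤ)+1) = ((m+1:ℕ):ℤ) by push_cast; ring]
      have h2X : (2 * X : ℝ[X]) = C 2 * X := by rw [map_ofNat]
      have hdm : (2 * X * U ℝ (m+1 : ℕ)).natDegree = m + 2 := by
        rw [h2X, mul_assoc, natDegree_C_mul (by norm_num), natDegree_X_mul hne1, hd1]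
      have hlm : (2 * X * U ℝ (m+1 : ℕ)).leadingCoeff = 2^(m+2) := by
        rw [h2X, mul_assoc, leadingCoeff_mul, leadingCoeff_mul, leadingCoeff_C, leadingCoeff_X, hl1]
        ring
      have hdlt : (U ℝ (m:ℕ)).natDegree < (2 * X * U ℝ (m+1 : ℕ)).natDegree := by
        rw [hdm, hd0]; omega
      constructor
      · rw [hrec, natDegree_sub_eq_left_of_natDegree_lt hdlt, hdm]
      · rw [hrec, leadingCoeff_sub_of_degree_lt (degree_lt_degree hdlt), hlm]

lemma U_iter_deriv_nonneg (n : ℕ) (hn : 7 ≤ n) (k : ℕ) (t : ℝ) (ht : Real.cos (π / n) ≤ t) :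
    0 ≤ (derivative^[k] (U ℝ (n-1 : ℕ))).eval t := by
  have hnpos : (0:ℝ) < n := by positivity
  obtain ⟨hdeg, hlead⟩ := U_spec (n-1)
  set p := U ℝ (n-1 : ℕ) with hp
  set M : Multiset ℝ := (Finset.Icc 1 (n-1)).val.map (fun k : ℕ => Real.cos (k * π / n)) with hM
  have hmem : ∀ j : ℕ, j ∈ Finset.Icc 1 (n-1) → (j : ℝ) * π / n ∈ Set.Icc 0 π := by
    intro j hj
    rw [Finset.mem_Icc] at hj
    constructor
    · positivity
    · rw [div_le_iff₀ hnpos]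
      have : (j:ℝ) ≤ (n:ℝ) - 1 := by
        have : (j:ℝ) ≤ ((n-1:ℕ):ℝ) := by exact_mod_cast hj.2
        rw [Nat.cast_sub (by omega)] at this; simpa using this
      nlinarith [Real.pi_pos]
  have hnodup : M.Nodup := by
    rw [hM]
    refine Multiset.Nodup.map_on ?_ (Finset.Icc 1 (n-1)).nodup
    intro a ha b hb hab
    have h1 := Real.injOn_cos (hmem a ha) (hmem b hb) hab
    have h2 : (a:ℝ) = b := by
      have hπ : π ≠ 0 := Real.pi_ne_zero
      have hn0 : (n:ℝ) ≠ 0 := hnpos.ne'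
      rw [div_left_inj' hn0] at h1
      exact mul_right_cancel₀ hπ h1
    exact_mod_cast h2
  have hroot : ∀ r ∈ M, p.IsRoot r := by
    intro r hr
    rw [hM, Multiset.mem_map] at hr
    obtain ⟨j, hj, rfl⟩ := hr
    rw [← Finset.mem_def, Finset.mem_Icc] at hj
    have h1j : (1:ℝ) ≤ j := by exact_mod_cast hj.1
    have hθ : (0:ℝ) < (j:ℝ) * π / n := by
      have := Real.pi_pos; positivity
    have hθπ : (j:ℝ) * π / n < π := by
      have : (j:ℝ) ≤ (n:ℝ) - 1 := by
        have : (j:ℝ) ≤ ((n-1:ℕ):ℝ) := by exact_mod_cast hj.2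
        rw [Nat.cast_sub (by omega)] at this; simpa using this
      rw [div_lt_iff₀ hnpos]
      nlinarith [Real.pi_pos]
    have hsin : Real.sin ((j:ℝ) * π / n) ≠ 0 :=
      (Real.sin_pos_of_pos_of_lt_pi hθ hθπ).ne'
    have hU := U_real_cos ((j:ℝ) * π / n) ((n-1:ℕ) : ℤ)
    have hcast : ((((n-1:ℕ):ℤ):ℝ) + 1) = (n:ℝ) := by
      push_cast [Nat.cast_sub (by omega : 1 ≤ n)]; try ring
    rw [hcast] at hU
    have harg : (n:ℝ) * ((j:ℝ) * π / n) = (j:ℝ) * π := by field_simp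
    rw [harg, Real.sin_nat_mul_pi] at hU
    rcases mul_eq_zero.mp hU with h | h
    · exact h
    · exact absurd h hsin
  have hpne : p ≠ 0 := by
    intro h; rw [h] at hlead; simp at hlead; exact absurd hlead.symm (by positivity)
  have hple : M ≤ p.roots := by
    rw [Multiset.le_iff_count]
    intro a
    by_cases ha : a ∈ M
    · have h1 : M.count a = 1 := Multiset.count_eq_one_of_mem hnodup ha
      rw [h1, count_roots]
      exact (rootMultiplicity_pos hpne).mpr (hroot a ha)
    · simp [Multiset.count_eq_zero_of_notMem ha]
  have hcard : M.card = p.natDegree := by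
    rw [hM, Multiset.card_map, hdeg]
    simp [Nat.card_Icc]
  have hMeq : M = p.roots := by
    refine Multiset.eq_of_le_of_card_le hple ?_
    rw [hcard]
    exact p.card_roots'
  have hfact := Polynomial.C_leadingCoeff_mul_prod_multiset_X_sub_C (p := p) (by rw [← hMeq, hcard])
  have hrle : ∀ r ∈ p.roots, r ≤ Real.cos (π / n) := by
    intro r hr
    rw [← hMeq, hM, Multiset.mem_map] at hr
    obtain ⟨j, hj, rfl⟩ := hr
    rw [← Finset.mem_def] at hj
    have h1j : (1:ℝ) ≤ j := by exact_mod_cast (Finset.mem_Icc.mp hj).1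
    refine Real.cos_le_cos_of_nonneg_of_le_pi (by positivity) (hmem j hj).2 ?_
    rw [div_le_div_iff₀ hnpos hnpos]
    nlinarith [mul_nonneg (mul_nonneg (sub_nonneg.mpr h1j) Real.pi_pos.le) hnpos.le]
  have := prod_iter_deriv_nonneg (Real.cos (π / n)) p.roots hrle p.leadingCoeff
    (by rw [hlead]; positivity) k t ht
  rwa [hfact] at this

lemma q_exists (n : ℕ) (hn : 7 ≤ n) : ∃ q : ℝ[X],
    (1 - X) * q = C 2 * (1 + X) * (1 - T ℝ n) ∧
    ∀ t ∈ Set.Ioo (Real.cos (2 * π / n)) 1, 0 ≤ (derivative (derivative q)).eval t := by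
  have hnpos : (0:ℝ) < n := by positivity
  have hT1 : (T ℝ n).eval 1 = 1 := by
    have := T_real_cos 0 (n : ℤ)
    simpa using this
  have hdvd : (X - C 1) ∣ (1 - T ℝ n) := by
    rw [dvd_iff_isRoot]
    simp [IsRoot, hT1]
  obtain ⟨P0, hP0⟩ := hdvd
  rw [C_1] at hP0
  refine ⟨C 2 * (1 + X) * (-P0), ?_, ?_⟩
  · linear_combination (-(C 2) * (1 + X)) * hP0
  set q : ℝ[X] := C 2 * (1 + X) * (-P0) with hq
  have hqid : (1 - X) * q = C 2 * (1 + X) * (1 - T ℝ n) := by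
    rw [hq]; linear_combination (-(C 2) * (1 + X)) * hP0
  set u : ℝ[X] := C 2 * X^2 - 1 with hu
  set Up : ℝ[X] := U ℝ (n-1 : ℕ) with hUp
  have hcomp : q.comp u = C 4 * X^2 * Up^2 := by
    apply Polynomial.eq_of_infinite_eval_eq
    refine Set.Infinite.mono ?_ (Set.Ioo_infinite (show (0:ℝ) < 1 by norm_num))
    intro s hs
    obtain ⟨hs0, hs1⟩ := hs
    simp only [Set.mem_setOf_eq]
    set φ := Real.arccos s with hφ
    have hcosφ : Real.cos φ = s := Real.cos_arccos (by linarith) (by linarith)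
    have hsinφ : Real.sin φ = Real.sqrt (1 - s^2) := by rw [hφ, Real.sin_arccos]
    have hsinpos : 0 < Real.sin φ := by
      rw [hsinφ]; apply Real.sqrt_pos.mpr; nlinarith
    have hcos2 : Real.cos (2*φ) = 2*s^2 - 1 := by
      rw [Real.cos_two_mul, hcosφ]
    have hevalu : eval s u = 2*s^2 - 1 := by simp [hu]
    rw [eval_comp, hevalu]
    have hqe := congrArg (eval (2*s^2 - 1)) hqid
    simp only [eval_mul, eval_sub, eval_add, eval_one, eval_X, eval_C] at hqe
    have hTe : (T ℝ n).eval (2*s^2-1) = Real.cos ((n:ℝ) * (2*φ)) := by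
      rw [← hcos2, T_real_cos]; norm_cast
    rw [hTe] at hqe
    have hden : 1 - (2*s^2 - 1) = 2 * Real.sin φ^2 := by
      have := Real.sin_sq_add_cos_sq φ
      rw [hcosφ] at this; nlinarith
    have h2n : 1 - Real.cos ((n:ℝ)*(2*φ)) = 2 * Real.sin ((n:ℝ)*φ)^2 := by
      have h1 : (n:ℝ)*(2*φ) = 2*((n:ℝ)*φ) := by ring
      rw [h1, Real.cos_two_mul]
      have := Real.sin_sq_add_cos_sq ((n:ℝ)*φ)
      nlinarith
    have hUe : (Up.eval s) * Real.sin φ = Real.sin ((n:ℝ)*φ) := by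
      have h := U_real_cos φ ((n-1:ℕ) : ℤ)
      have hcast : ((((n-1:ℕ):ℤ):ℝ) + 1) = (n:ℝ) := by
        push_cast [Nat.cast_sub (by omega : 1 ≤ n)]; try ring
      rw [hcast, hcosφ] at h
      rw [hUp]; exact h
    have key : (2 * Real.sin φ^2) * (q.eval (2*s^2-1))
        = (2 * Real.sin φ^2) * (eval s (C 4 * X^2 * Up^2)) := by
      simp only [eval_mul, eval_pow, eval_C, eval_X]
      linear_combination (-(q.eval (2*s^2-1))) * hden + hqe + (4*s^2) * h2n
        + (-(8*s^2)*(Real.sin ((n:ℝ)*φ) + (Up.eval s) * Real.sin φ)) * hUe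
    exact mul_left_cancel₀ (by positivity) key
  -- now the second-derivative bound
  intro t ht
  obtain ⟨ht1, ht2⟩ := ht
  have hc1 : (-1:ℝ) ≤ Real.cos (2*π/n) := Real.neg_one_le_cos _
  have htpos : 0 < 1 + t := by linarith
  set s : ℝ := Real.sqrt ((1+t)/2) with hs
  have hs0 : 0 < s := Real.sqrt_pos.mpr (by linarith)
  have hs2 : s^2 = (1+t)/2 := Real.sq_sqrt (by linarith)
  have hcospi : Real.cos (2*π/n) = 2 * Real.cos (π/n)^2 - 1 := by
    rw [show 2*π/(n:ℝ) = 2*(π/n) by ring, Real.cos_two_mul]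
  have hcosπn_pos : 0 < Real.cos (π/n) := by
    apply Real.cos_pos_of_mem_Ioo
    rw [Set.mem_Ioo]
    have h7 : (7:ℝ) ≤ n := by exact_mod_cast hn
    constructor
    · have h1 : 0 < π/(n:ℝ) := by positivity
      have := Real.pi_pos
      linarith
    · rw [div_lt_div_iff₀ hnpos (by norm_num : (0:ℝ) < 2)]
      nlinarith [Real.pi_pos]
  have hscos : Real.cos (π/n) ≤ s := by
    nlinarith [hs2, hcosπn_pos, hs0, hcospi, ht1]
  have hts : t = 2*s^2 - 1 := by rw [hs2]; ring
  have hdu : derivative u = C 4 * X := by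
    rw [hu, derivative_sub, derivative_one, derivative_C_mul, derivative_X_pow]
    rw [← mul_assoc, ← Polynomial.C_mul]
    norm_num
  have e1 : derivative (C 4 * X^2 * Up^2) = C 4 * X * (derivative q).comp u := by
    rw [← hcomp, derivative_comp, hdu]
  have hdC4X : derivative (C 4 * X : ℝ[X]) = C 4 := by simp
  have e2 : derivative (derivative (C 4 * X^2 * Up^2))
      = C 4 * ((derivative q).comp u) + C 4 * X * (C 4 * X * (derivative (derivative q)).comp u) := by
    rw [e1, derivative_mul, hdC4X, derivative_comp, hdu]
  set d1 := (derivative q).eval t with hd1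
  set d2 := (derivative (derivative q)).eval t with hd2
  have hevu : eval s u = t := by rw [hu]; simp; linarith [hts]
  have E1 : eval s (derivative (C 4 * X^2 * Up^2)) = 4*s*d1 := by
    rw [e1]; simp [eval_comp, hevu]; try ring
    exact Or.inl rfl
  have E2 : eval s (derivative (derivative (C 4 * X^2 * Up^2))) = 4*d1 + 16*s^2*d2 := by
    rw [e2]; simp [eval_comp, hevu]; try ring
  set u0 := Up.eval s with hu0d
  set u1 := (derivative Up).eval s with hu1d
  set u2 := (derivative (derivative Up)).eval s with hu2d
  have F1 : eval s (derivative (C 4 * X^2 * Up^2)) = 8*s*u0^2 + 8*s^2*u0*u1 := by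
    simp [derivative_mul, derivative_pow]
    ring
  have F2 : eval s (derivative (derivative (C 4 * X^2 * Up^2)))
      = 8*u0^2 + 32*s*u0*u1 + 8*s^2*(u1^2 + u0*u2) := by
    simp [derivative_mul, derivative_pow, derivative_add]
    ring
  have hn0 : 0 ≤ u0 := by
    have := U_iter_deriv_nonneg n hn 0 s hscos
    simpa using this
  have hn1 : 0 ≤ u1 := by
    have := U_iter_deriv_nonneg n hn 1 s hscos
    simpa using this
  have hn2 : 0 ≤ u2 := by
    have := U_iter_deriv_nonneg n hn 2 s hscos
    simpa [Function.iterate_succ_apply'] using this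
  have hkey : 16*s^3*d2 = 24*s^2*u0*u1 + 8*s^3*u1^2 + 8*s^3*u0*u2 := by
    have h1 : 4*s*d1 = 8*s*u0^2 + 8*s^2*u0*u1 := by rw [← E1, F1]
    have h2 : 4*d1 + 16*s^2*d2 = 8*u0^2 + 32*s*u0*u1 + 8*s^2*(u1^2 + u0*u2) := by rw [← E2, F2]
    nlinarith [h1, h2, hs0]
  have h16 : (0:ℝ) < 16*s^3 := by positivity
  have hA := mul_nonneg (mul_nonneg (by positivity : (0:ℝ) ≤ 24*s^2) hn0) hn1
  have hB := mul_nonneg (by positivity : (0:ℝ) ≤ 8*s^3) (sq_nonneg u1)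
  have hC := mul_nonneg (mul_nonneg (by positivity : (0:ℝ) ≤ 8*s^3) hn0) hn2
  have hge : 0 ≤ 16*s^3*d2 := by nlinarith [hA, hB, hC]
  nlinarith [hge, h16, mul_pos h16 h16]

end Aux

open Polynomial Polynomial.Chebyshev in
theorem stmt_10 (n : ℕ) (hn : 7 ≤ n) :
    ConvexOn ℝ (Set.Ico (Real.cos (2 * π / n)) 1)
      (fun t : ℝ => (1 - t) * ((n : ℝ) ^ 2 * ((n : ℝ) ^ 2 - 1) / 3)
        - 2 * (1 + t) * (n : ℝ) ^ 2 + 2 * (1 + t) * (1 - Tch n t) / (1 - t)) := by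
  obtain ⟨q, hqid, hq2⟩ := q_exists n hn
  set K1 : ℝ := (n:ℝ)^2*((n:ℝ)^2-1)/3 with hK1
  set W : ℝ[X] := C K1 * (1 - X) - C (2*(n:ℝ)^2) * (1 + X) + q with hW
  have hW2 : derivative (derivative W) = derivative (derivative q) := by
    rw [hW]
    simp [derivative_sub, derivative_add, derivative_C_mul, derivative_one, derivative_X, derivative_pow, derivative_natCast]
  have hd1 : deriv (fun x : ℝ => W.eval x) = fun x => (derivative W).eval x :=
    funext fun x => W.deriv
  have hconv : ConvexOn ℝ (Set.Ico (Real.cos (2*π/n)) 1) (fun x => W.eval x) := by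
    apply convexOn_of_deriv2_nonneg (convex_Ico _ _)
    · exact W.continuous.continuousOn
    · exact W.differentiable.differentiableOn
    · rw [hd1]
      exact (derivative W).differentiable.differentiableOn
    · intro x hx
      rw [interior_Ico] at hx
      have : deriv^[2] (fun x : ℝ => W.eval x) x
          = (derivative (derivative W)).eval x := by
        rw [show (2:ℕ) = 1+1 from rfl, Function.iterate_succ_apply', Function.iterate_one, hd1]
        exact (derivative W).deriv
      rw [this, hW2]
      exact hq2 x hx
  refine hconv.congr ?_
  intro t ht
  obtain ⟨ht1, ht2⟩ := ht
  have hne : (1:ℝ) - t ≠ 0 := sub_ne_zero.mpr (by linarith)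
  have hqe := congrArg (eval t) hqid
  simp only [eval_mul, eval_sub, eval_add, eval_one, eval_X, eval_C] at hqe
  show W.eval t = _
  rw [hW]
  simp only [eval_add, eval_sub, eval_mul, eval_C, eval_one, eval_X]
  rw [Tch]
  field_simp
  linear_combination hqe
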